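/- Fix m ≥ 1 and let M ∈ ℚ[[z]] be the unique formal power series satisfying M = 1 + z M^{m+1}. Then exp( Σ_{k≥1} (1/k) binom((m+1)k, k) z^k ) = M^{m+1} in ℚ[[z]]. -/

import Mathlib

open PowerSeries Finset


/-- The exponential of a formal power series over `ℚ` (intended for series with zero
constant term): the coefficient of `z^N` in `∑_k f^k / k!`. -/
noncomputable def expPS (f : PowerSeries ℚ) : PowerSeries ℚ :=
  PowerSeries.mk fun N =>
    ∑ k ∈ Finset.range (N + 1), (Nat.factorial k : ℚ)⁻¹ * PowerSeries.coeff N (f ^ k)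

lemma coeff_pow_eq_zero {f : PowerSeries ℚ} (h0 : PowerSeries.constantCoeff f = 0)
    {n k : ℕ} (h : n < k) : PowerSeries.coeff n (f ^ k) = 0 := by
  obtain ⟨g, rfl⟩ := (PowerSeries.X_dvd_iff.mpr h0)
  rw [mul_pow, PowerSeries.coeff_mul]
  apply Finset.sum_eq_zero
  rintro ⟨i, j⟩ hij
  rw [Finset.HasAntidiagonal.mem_antidiagonal] at hij
  have : i ≠ k := by omega
  simp [PowerSeries.coeff_X_pow, this]

noncomputable def EPS (f : PowerSeries ℚ) (K : ℕ) : PowerSeries ℚ :=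
  ∑ k ∈ Finset.range (K + 1), PowerSeries.C ((Nat.factorial k : ℚ)⁻¹) * f ^ k

lemma coeff_EPS (f : PowerSeries ℚ) (h0 : PowerSeries.constantCoeff f = 0)
    {N K : ℕ} (h : N ≤ K) :
    PowerSeries.coeff N (EPS f K) = PowerSeries.coeff N (expPS f) := by
  rw [EPS, map_sum, expPS, PowerSeries.coeff_mk]
  simp only [PowerSeries.coeff_C_mul]
  rw [← Finset.sum_subset (Finset.range_subset_range.mpr (by omega : N + 1 ≤ K + 1))]
  intro k hk hk2
  rw [Finset.mem_range] at hk hk2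
  rw [coeff_pow_eq_zero h0 (by omega), mul_zero]

lemma deriv_EPS (f : PowerSeries ℚ) (K : ℕ) :
    PowerSeries.derivative ℚ (EPS f (K + 1)) = PowerSeries.derivative ℚ f * EPS f K := by
  rw [EPS, map_sum, Finset.sum_range_succ']
  have h0 : (PowerSeries.derivative ℚ) (PowerSeries.C ((Nat.factorial 0 : ℚ)⁻¹) * f ^ 0) = 0 := by
    simp
  rw [h0, add_zero, EPS, Finset.mul_sum]
  apply Finset.sum_congr rfl
  intro k hk
  rw [Derivation.leibniz, Derivation.leibniz_pow, PowerSeries.derivative_C]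
  simp only [smul_zero, add_zero, Nat.add_sub_cancel]
  have hc : ((k+1 : ℕ) : PowerSeries ℚ) * PowerSeries.C ((((k+1) : ℕ).factorial : ℚ))⁻¹
      = PowerSeries.C ((Nat.factorial k : ℚ)⁻¹) := by
    rw [← map_natCast (PowerSeries.C), ← map_mul]
    congr 1
    rw [Nat.factorial_succ]
    push_cast
    field_simp
  rw [smul_eq_mul, smul_eq_mul, nsmul_eq_mul, ← mul_assoc,
    mul_comm ((PowerSeries.C) ((((k+1) : ℕ).factorial : ℚ))⁻¹), hc]
  ring

lemma deriv_expPS (f : PowerSeries ℚ) (h0 : PowerSeries.constantCoeff f = 0) :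
    PowerSeries.derivative ℚ (expPS f)
      = PowerSeries.derivative ℚ f * expPS f := by
  ext n
  rw [PowerSeries.coeff_derivative, ← coeff_EPS f h0 (by omega : n + 1 ≤ n + 2),
    ← PowerSeries.coeff_derivative, deriv_EPS, PowerSeries.coeff_mul, PowerSeries.coeff_mul]
  apply Finset.sum_congr rfl
  rintro ⟨i, j⟩ hij
  rw [Finset.HasAntidiagonal.mem_antidiagonal] at hij
  rw [coeff_EPS f h0 (by omega : j ≤ n + 1)]

lemma coeff_zero_expPS (f : PowerSeries ℚ) :
    PowerSeries.coeff 0 (expPS f) = 1 := by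
  simp [expPS]

lemma ode_unique (g F G : PowerSeries ℚ)
    (hF : PowerSeries.derivative ℚ F = g * F)
    (hG : PowerSeries.derivative ℚ G = g * G)
    (h0 : PowerSeries.coeff 0 F = PowerSeries.coeff 0 G) : F = G := by
  ext n
  induction n using Nat.strong_induction_on with
  | _ n ih =>
    match n with
    | 0 => exact h0
    | n + 1 =>
      have h1 : PowerSeries.coeff n (PowerSeries.derivative ℚ F)
          = PowerSeries.coeff n (PowerSeries.derivative ℚ G) := by
        rw [hF, hG, PowerSeries.coeff_mul, PowerSeries.coeff_mul]
        apply Finset.sum_congr rfl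
        rintro ⟨i, j⟩ hij
        rw [Finset.HasAntidiagonal.mem_antidiagonal] at hij
        rw [ih j (by omega)]
      rw [PowerSeries.coeff_derivative, PowerSeries.coeff_derivative] at h1
      have : ((n : ℚ) + 1) ≠ 0 := by positivity
      exact mul_right_cancel₀ this h1

/-- Coefficient of `z^n` in `M^r`: the generalized (Fuss–Catalan) ballot number. -/
noncomputable def aQ (m n r : ℕ) : ℚ :=
  if n = 0 then 1 else
    (r : ℚ) * (((m+1)*n + r).factorial : ℚ) /
      ((((m+1)*n + r : ℕ) : ℚ) * (n.factorial : ℚ) * ((m*n + r).factorial : ℚ))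

lemma aQ_one (m r : ℕ) : aQ m 1 r = r := by
  rw [aQ, if_neg one_ne_zero]
  have e1 : (m+1)*1 + r = (m*1 + r) + 1 := by ring
  rw [e1, Nat.factorial_succ]
  have h1 : ((m*1 + r + 1 : ℕ) : ℚ) ≠ 0 := by positivity
  have h2 : (((m*1 + r).factorial : ℕ) : ℚ) ≠ 0 :=
    Nat.cast_ne_zero.mpr (Nat.factorial_ne_zero _)
  field_simp
  push_cast
  ring

lemma aQ_succ_succ (m t s : ℕ) :
    aQ m (t+2) (s+1) = aQ m (t+2) s + aQ m (t+1) (m+s+1) := by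
  have e1 : (m+1)*(t+2) + (s+1) = ((m+1)*(t+2)+s) + 1 := by ring
  have e2 : m*(t+2) + (s+1) = (m*(t+2)+s) + 1 := by ring
  have e3 : (m+1)*(t+1) + (m+s+1) = ((m+1)*(t+2)+s) := by ring
  have e4 : m*(t+1) + (m+s+1) = (m*(t+2)+s) + 1 := by ring
  have e5 : (t+2).factorial = (t+2) * (t+1).factorial := rfl
  rw [aQ, aQ, aQ, if_neg (Nat.succ_ne_zero _), if_neg (Nat.succ_ne_zero _),
    if_neg (Nat.succ_ne_zero _), e1, e2, e3, e4, Nat.factorial_succ ((m+1)*(t+2)+s),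
    Nat.factorial_succ (m*(t+2)+s), e5]
  have hA : (((m+1)*(t+2)+s : ℕ) : ℚ) ≠ 0 := by positivity
  have hA1 : (((m+1)*(t+2)+s : ℕ) : ℚ) + 1 ≠ 0 := by positivity
  have hB : (((m*(t+2)+s).factorial : ℕ) : ℚ) ≠ 0 :=
    Nat.cast_ne_zero.mpr (Nat.factorial_ne_zero _)
  have hB1 : ((m*(t+2)+s : ℕ) : ℚ) + 1 ≠ 0 := by positivity
  have hT : (((t+1).factorial : ℕ) : ℚ) ≠ 0 :=
    Nat.cast_ne_zero.mpr (Nat.factorial_ne_zero _)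
  have hT2 : ((t : ℚ) + 2) ≠ 0 := by positivity
  have hFA : ((((m+1)*(t+2)+s).factorial : ℕ) : ℚ) ≠ 0 :=
    Nat.cast_ne_zero.mpr (Nat.factorial_ne_zero _)
  push_cast
  field_simp
  ring

lemma aQ_succ (m n s : ℕ) : aQ m (n+1) (s+1) = aQ m (n+1) s + aQ m n (m+s+1) := by
  cases n with
  | zero => rw [aQ_one, aQ_one, aQ]; push_cast; simp
  | succ t => exact aQ_succ_succ m t s

section MainSection
variable (m : ℕ) (M : PowerSeries ℚ) (hM : M = 1 + PowerSeries.X * M ^ (m + 1))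

include hM

lemma constM : PowerSeries.constantCoeff M = 1 := by
  conv_lhs => rw [hM]
  simp

lemma Mpow_succ (r : ℕ) : M ^ (r+1) = M ^ r + PowerSeries.X * M ^ (m + r + 1) := by
  have e : M ^ (r+1) = M ^ r * (1 + PowerSeries.X * M ^ (m+1)) := by
    rw [← hM, pow_succ]
  rw [e]
  have : M ^ r * (PowerSeries.X * M ^ (m+1)) = PowerSeries.X * M ^ (m + r + 1) := by
    rw [show m + r + 1 = r + (m+1) by ring, pow_add]; ring
  rw [mul_add, mul_one, this]

lemma coeff_M_pow : ∀ n r, PowerSeries.coeff n (M ^ r) = aQ m n r := by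
  intro n
  induction n using Nat.strong_induction_on with
  | _ n ih =>
    match n with
    | 0 =>
      intro r
      rw [PowerSeries.coeff_zero_eq_constantCoeff, map_pow, constM m M hM, one_pow, aQ, if_pos rfl]
    | (n + 1) =>
      intro r
      induction r with
      | zero =>
        rw [pow_zero, aQ, if_neg (Nat.succ_ne_zero _), PowerSeries.coeff_one,
          if_neg (Nat.succ_ne_zero _)]
        push_cast
        simp
      | succ r ihr =>
        rw [Mpow_succ m M hM, map_add, PowerSeries.coeff_succ_X_mul, ihr,
          ih n (by omega) (m + r + 1)]
        rw [aQ_succ m n r]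

/-- `B = ∑ binom((m+1)k, k) z^k`. -/
noncomputable def BPS (m : ℕ) : PowerSeries ℚ :=
  PowerSeries.mk fun k => ((((m+1)*k).choose k : ℕ) : ℚ)

lemma coeff_B_M_pow : ∀ n r, PowerSeries.coeff n (BPS m * M ^ r)
    = ((((m+1)*n + r).choose n : ℕ) : ℚ) := by
  intro n
  induction n using Nat.strong_induction_on with
  | _ n ih =>
    match n with
    | 0 =>
      intro r
      rw [PowerSeries.coeff_zero_eq_constantCoeff, map_mul, map_pow, constM m M hM, one_pow,
        mul_one, ← PowerSeries.coeff_zero_eq_constantCoeff]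
      simp [BPS]
    | (n + 1) =>
      intro r
      induction r with
      | zero => simp [BPS]
      | succ r ihr =>
        have e : BPS m * M ^ (r+1) = BPS m * M ^ r + PowerSeries.X * (BPS m * M ^ (m+r+1)) := by
          rw [Mpow_succ m M hM]; ring
        rw [e, map_add, PowerSeries.coeff_succ_X_mul, ihr, ih n (by omega) (m + r + 1)]
        have e1 : (m+1)*(n+1) + (r+1) = ((m+1)*(n+1) + r) + 1 := by ring
        have e2 : (m+1)*n + (m+r+1) = (m+1)*(n+1) + r := by ring
        rw [e1, e2, Nat.choose_succ_succ ((m+1)*(n+1)+r) n]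
        push_cast
        ring

end MainSection

/-- The log series `L`. -/
noncomputable def LPS (m : ℕ) : PowerSeries ℚ :=
  PowerSeries.mk fun k =>
    if k = 0 then 0 else (k : ℚ)⁻¹ * (Nat.choose ((m + 1) * k) k : ℚ)

lemma X_mul_deriv_L (m : ℕ) :
    PowerSeries.X * PowerSeries.derivative ℚ (LPS m) = BPS m - 1 := by
  ext n
  cases n with
  | zero => simp [BPS, PowerSeries.coeff_zero_X_mul]
  | succ k =>
    rw [PowerSeries.coeff_succ_X_mul, PowerSeries.coeff_derivative, LPS,
      PowerSeries.coeff_mk, if_neg (Nat.succ_ne_zero k), map_sub, BPS, PowerSeries.coeff_mk,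
      PowerSeries.coeff_one, if_neg (Nat.succ_ne_zero k)]
    have : ((k : ℚ) + 1) ≠ 0 := by positivity
    push_cast
    field_simp
    rw [sub_zero]

lemma aQ_mul (m n : ℕ) : aQ m (n+1) (m+1) * ((n : ℚ) + 2)
    = ((((m+1)*(n+1) + (m+1)).choose (n+1) : ℕ) : ℚ) := by
  have e1 : (m+1)*(n+1) + (m+1) = (m+1)*(n+2) := by ring
  have e2 : m*(n+1) + (m+1) = m*(n+2) + 1 := by ring
  have hle : n + 1 ≤ (m+1)*(n+2) := by nlinarith
  have e3 : (m+1)*(n+2) - (n+1) = m*(n+2) + 1 := by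
    have h : (m+1)*(n+2) = m*(n+2)+(n+2) := by ring
    omega
  rw [aQ, if_neg (Nat.succ_ne_zero _), e1, e2, Nat.cast_choose ℚ hle, e3]
  have h1 : (((m+1)*(n+2) : ℕ) : ℚ) ≠ 0 := by positivity
  have h2 : (((n+1).factorial : ℕ) : ℚ) ≠ 0 := Nat.cast_ne_zero.mpr (Nat.factorial_ne_zero _)
  have h3 : (((m*(n+2)+1).factorial : ℕ) : ℚ) ≠ 0 := Nat.cast_ne_zero.mpr (Nat.factorial_ne_zero _)
  have h4 : ((((m+1)*(n+2)).factorial : ℕ) : ℚ) ≠ 0 := Nat.cast_ne_zero.mpr (Nat.factorial_ne_zero _)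
  field_simp
  push_cast
  ring

lemma ode_G (m : ℕ) (M : PowerSeries ℚ) (hM : M = 1 + PowerSeries.X * M ^ (m + 1)) :
    PowerSeries.derivative ℚ (M ^ (m+1))
      = PowerSeries.derivative ℚ (LPS m) * M ^ (m+1) := by
  have hX : (PowerSeries.X : PowerSeries ℚ) ≠ 0 := PowerSeries.X_ne_zero
  apply mul_left_cancel₀ hX
  rw [← mul_assoc, X_mul_deriv_L m, sub_mul, one_mul]
  ext n
  cases n with
  | zero =>
    have h1 := coeff_B_M_pow m M hM 0 (m+1)
    have h2 := coeff_M_pow m M hM 0 (m+1)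
    rw [PowerSeries.coeff_zero_X_mul, map_sub, h1, h2, aQ, if_pos rfl]
    simp
  | succ k =>
    rw [PowerSeries.coeff_succ_X_mul, PowerSeries.coeff_derivative, map_sub,
      coeff_B_M_pow m M hM (k+1) (m+1), coeff_M_pow m M hM (k+1) (m+1)]
    have := aQ_mul m k
    push_cast at this ⊢
    linarith [this]


/-- Fix `m ≥ 1` and let `M ∈ ℚ[[z]]` be the unique formal power series satisfying
`M = 1 + z M^{m+1}`.  Then `exp( ∑_{k≥1} (1/k) binom((m+1)k, k) z^k ) = M^{m+1}`. -/
theorem exp_L_eq_M_pow (m : ℕ) (hm : 1 ≤ m) (M : PowerSeries ℚ)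
    (hM : M = 1 + PowerSeries.X * M ^ (m + 1)) :
    expPS (PowerSeries.mk fun k =>
        if k = 0 then 0 else (k : ℚ)⁻¹ * (Nat.choose ((m + 1) * k) k : ℚ))
      = M ^ (m + 1) := by
  have hL0 : PowerSeries.constantCoeff (LPS m) = 0 := by
    rw [← PowerSeries.coeff_zero_eq_constantCoeff, LPS, PowerSeries.coeff_mk]
    simp
  have hgoal : expPS (LPS m) = M ^ (m+1) := by
    apply ode_unique (PowerSeries.derivative ℚ (LPS m))
    · exact deriv_expPS (LPS m) hL0
    · exact ode_G m M hM
    · rw [coeff_zero_expPS, coeff_M_pow m M hM 0 (m+1), aQ, if_pos rfl]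
  exact hgoal
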